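/- arXiv:2005.01154 — 2 statements merged into one kernel-verified Lean document; each statement's English description precedes it below -/
import Mathlib

section
/- For every u ∈ ⋀^r V, the identity β(w^{-1}) ⌟ u = σ̄_-(w)(β_0 ⌟ σ_-(w) u) holds, where β(w^{-1}) = ∑_{j≥0} β_j w^{-j}. -/
noncomputable section
open Finset

abbrev Vb : Type := ℕ →₀ ℚ
abbrev ExtV : Type := ExteriorAlgebra ℚ Vb

/-- basis vectors `b_i` inside the exterior algebra -/
def bv (i : ℕ) : ExtV := ExteriorAlgebra.ι ℚ (Finsupp.single i (1:ℚ))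

/-- the family of coefficients of a Hasse–Schmidt derivation with `D 0` acting as
the identity on scalars -/
def IsHSFamily (D : ℕ → Module.End ℚ ExtV) : Prop :=
  (∀ (i : ℕ) (u v : ExtV), D i (u * v) = ∑ p ∈ Finset.HasAntidiagonal.antidiagonal i, D p.1 u * D p.2 v) ∧
  (∀ i : ℕ, D i (1 : ExtV) = if i = 0 then 1 else 0)

/-- `σ₊(z)`, via `σ₊(z) b_j = ∑_i b_{j+i} z^i` -/
def IsSigmaPlus (D : ℕ → Module.End ℚ ExtV) : Prop :=
  IsHSFamily D ∧ ∀ i j : ℕ, D i (bv j) = bv (j + i)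

/-- `σ₋(w)` (coefficients of `w^{-i}`), via `σ₋(w) b_j = ∑_i b_{j-i} w^{-i}` -/
def IsSigmaMinus (D : ℕ → Module.End ℚ ExtV) : Prop :=
  IsHSFamily D ∧ ∀ i j : ℕ, D i (bv j) = if i ≤ j then bv (j - i) else 0

/-- `σ̄₊(z)`, via `σ̄₊(z) b_j = b_j - b_{j+1} z` -/
def IsSigmaBarPlus (D : ℕ → Module.End ℚ ExtV) : Prop :=
  IsHSFamily D ∧ ∀ i j : ℕ, D i (bv j) =
    if i = 0 then bv j else if i = 1 then -bv (j+1) else 0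

/-- `σ̄₋(w)` (coefficients of `w^{-i}`), via `σ̄₋(w) b_j = b_j - b_{j-1} w^{-1}`, `b_{-1}=0` -/
def IsSigmaBarMinus (D : ℕ → Module.End ℚ ExtV) : Prop :=
  IsHSFamily D ∧ ∀ i j : ℕ, D i (bv j) =
    if i = 0 then bv j else if i = 1 then (if j = 0 then 0 else -bv (j-1)) else 0

/-- `[b]^r_λ = b_{r-1+λ₁} ∧ ⋯ ∧ b_{λ_r}` -/
def wedgeB (r : ℕ) (lam : Fin r → ℕ) : ExtV :=
  (List.ofFn fun i : Fin r => bv ((r - 1 - (i : ℕ)) + lam i)).prod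

/-- the dual basis element `β_j ∈ V*` -/
def betaF (j : ℕ) : Module.Dual ℚ Vb := Finsupp.lapply j

/-- contraction `β_j ⌟ ·` on the exterior algebra -/
def ctr (j : ℕ) : ExtV →ₗ[ℚ] ExtV :=
  CliffordAlgebra.contractLeft (Q := (0 : QuadraticForm ℚ Vb)) (betaF j)





/-- shift on `V`: `(shiftV a v) k = v (k + a)` -/
def shiftV (a : ℕ) : Vb →ₗ[ℚ] Vb :=
  Finsupp.lcomapDomain (· + a) (add_left_injective a)

lemma shiftV_apply (a : ℕ) (v : Vb) (k : ℕ) : shiftV a v k = v (k + a) := rfl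

lemma shiftV_zero (v : Vb) : shiftV 0 v = v := Finsupp.ext fun k => rfl

lemma shiftV_shiftV (b : ℕ) (v : Vb) : shiftV 1 (shiftV b v) = shiftV (b + 1) v :=
  Finsupp.ext fun k => by
    rw [shiftV_apply, shiftV_apply, shiftV_apply]
    congr 1
    omega

lemma shiftV_single (a k : ℕ) :
    shiftV a (Finsupp.single k (1:ℚ)) =
      if a ≤ k then Finsupp.single (k - a) (1:ℚ) else 0 := by
  split_ifs with h
  · ext n
    rw [shiftV_apply]
    simp only [Finsupp.single_apply]
    by_cases hn : k = n + a
    · rw [if_pos hn, if_pos (by omega)]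
    · rw [if_neg hn, if_neg (by omega)]
  · ext n
    rw [shiftV_apply]
    simp only [Finsupp.single_apply, Finsupp.coe_zero, Pi.zero_apply]
    rw [if_neg (by omega)]

lemma beta_shift (a : ℕ) (v : Vb) : betaF 0 (shiftV a v) = betaF a v := by
  show (shiftV a v) 0 = v a
  rw [shiftV_apply, Nat.zero_add]

lemma ext_iota {f g : Vb →ₗ[ℚ] ExtV}
    (h : ∀ k, f (Finsupp.single k (1:ℚ)) = g (Finsupp.single k (1:ℚ))) : f = g :=
  Finsupp.lhom_ext' fun k => LinearMap.ext_ring (by simpa using h k)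

lemma Sm_iota {Sm : ℕ → Module.End ℚ ExtV} (hSm : IsSigmaMinus Sm) (a : ℕ) (v : Vb) :
    Sm a (ExteriorAlgebra.ι ℚ v) = ExteriorAlgebra.ι ℚ (shiftV a v) := by
  have h : ((Sm a : ExtV →ₗ[ℚ] ExtV) ∘ₗ ExteriorAlgebra.ι ℚ)
      = (ExteriorAlgebra.ι ℚ ∘ₗ shiftV a) := by
    refine ext_iota fun k => ?_
    simp only [LinearMap.comp_apply]
    show Sm a (bv k) = ExteriorAlgebra.ι ℚ (shiftV a (Finsupp.single k (1:ℚ)))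
    rw [hSm.2 a k, shiftV_single]
    split_ifs with h
    · rfl
    · exact (map_zero _).symm
  exact LinearMap.congr_fun h v

lemma Sbm_iota {Sbm : ℕ → Module.End ℚ ExtV} (hSbm : IsSigmaBarMinus Sbm) (a : ℕ) (v : Vb) :
    Sbm a (ExteriorAlgebra.ι ℚ v)
      = if a = 0 then ExteriorAlgebra.ι ℚ v
        else if a = 1 then -(ExteriorAlgebra.ι ℚ (shiftV 1 v)) else 0 := by
  rcases a with _ | _ | a
  · rw [if_pos rfl]
    have h : ((Sbm 0 : ExtV →ₗ[ℚ] ExtV) ∘ₗ ExteriorAlgebra.ι ℚ)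
        = (ExteriorAlgebra.ι ℚ : Vb →ₗ[ℚ] ExtV) := by
      refine ext_iota fun k => ?_
      simp only [LinearMap.comp_apply]
      show Sbm 0 (bv k) = bv k
      rw [hSbm.2 0 k]; simp
    exact LinearMap.congr_fun h v
  · rw [if_neg (by omega), if_pos rfl]
    have h : ((Sbm 1 : ExtV →ₗ[ℚ] ExtV) ∘ₗ ExteriorAlgebra.ι ℚ)
        = -((ExteriorAlgebra.ι ℚ : Vb →ₗ[ℚ] ExtV) ∘ₗ shiftV 1) := by
      refine ext_iota fun k => ?_
      simp only [LinearMap.comp_apply, LinearMap.neg_apply]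
      show Sbm 1 (bv k) = -(ExteriorAlgebra.ι ℚ (shiftV 1 (Finsupp.single k (1:ℚ))))
      rw [hSbm.2 1 k, shiftV_single]
      rcases Nat.eq_zero_or_pos k with hk | hk
      · subst hk
        rw [if_neg one_ne_zero, if_pos rfl, if_pos rfl, if_neg (by omega)]
        simp
      · rw [if_neg one_ne_zero, if_pos rfl, if_neg (Nat.pos_iff_ne_zero.mp hk), if_pos (Nat.one_le_iff_ne_zero.mpr (Nat.pos_iff_ne_zero.mp hk))]
        rfl
    exact LinearMap.congr_fun h v
  · rw [if_neg (by omega), if_neg (by omega)]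
    have h : ((Sbm (a + 2) : ExtV →ₗ[ℚ] ExtV) ∘ₗ ExteriorAlgebra.ι ℚ)
        = (0 : Vb →ₗ[ℚ] ExtV) := by
      refine ext_iota fun k => ?_
      simp only [LinearMap.comp_apply, LinearMap.zero_apply]
      show Sbm (a + 2) (bv k) = 0
      rw [hSbm.2 (a + 2) k, if_neg (by omega), if_neg (by omega)]
    exact LinearMap.congr_fun h v

lemma ctr_iota_mul (j : ℕ) (v : Vb) (x : ExtV) :
    ctr j (ExteriorAlgebra.ι ℚ v * x) = betaF j v • x - ExteriorAlgebra.ι ℚ v * ctr j x :=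
  CliffordAlgebra.contractLeft_ι_mul (betaF j) v x

lemma ctr_algebraMap (j : ℕ) (q : ℚ) : ctr j (algebraMap ℚ ExtV q) = 0 :=
  CliffordAlgebra.contractLeft_algebraMap _ (betaF j) q

lemma ctr_one (j : ℕ) : ctr j (1 : ExtV) = 0 := by
  have := ctr_algebraMap j 1
  rwa [map_one] at this

-- PART 2: power series machinery

lemma key_sigma {M : Type*} [AddCommMonoid M] (m : ℕ) (G : (ℕ×ℕ) → (ℕ×ℕ) → (ℕ×ℕ) → M) :
    (∑ p ∈ antidiagonal m, ∑ q ∈ antidiagonal p.1, ∑ s ∈ antidiagonal p.2, G p q s)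
  = ∑ x ∈ (antidiagonal m).sigma (fun p => (antidiagonal p.1) ×ˢ (antidiagonal p.2)),
      G x.1 x.2.1 x.2.2 := by
  rw [Finset.sum_sigma]
  refine Finset.sum_congr rfl fun p _ => ?_
  rw [Finset.sum_product]

lemma sum4 {M : Type*} [AddCommMonoid M] (m : ℕ) (F : ℕ → ℕ → ℕ → ℕ → M) :
    (∑ p ∈ antidiagonal m, ∑ q ∈ antidiagonal p.1, ∑ s ∈ antidiagonal p.2,
        F q.1 q.2 s.1 s.2)
  = ∑ p ∈ antidiagonal m, ∑ q ∈ antidiagonal p.1, ∑ s ∈ antidiagonal p.2,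
        F q.1 s.1 q.2 s.2 := by
  rw [key_sigma m (fun _ q s => F q.1 q.2 s.1 s.2),
      key_sigma m (fun _ q s => F q.1 s.1 q.2 s.2)]
  refine Finset.sum_nbij'
    (fun x => ⟨(x.2.1.1 + x.2.2.1, x.2.1.2 + x.2.2.2), ((x.2.1.1, x.2.2.1), (x.2.1.2, x.2.2.2))⟩)
    (fun x => ⟨(x.2.1.1 + x.2.2.1, x.2.1.2 + x.2.2.2), ((x.2.1.1, x.2.2.1), (x.2.1.2, x.2.2.2))⟩)
    ?_ ?_ ?_ ?_ ?_
  · rintro ⟨⟨a, b⟩, ⟨⟨w, x⟩, ⟨y, z⟩⟩⟩ hmem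
    simp only [Finset.mem_sigma, Finset.mem_product, Finset.HasAntidiagonal.mem_antidiagonal] at hmem ⊢
    exact ⟨by omega, trivial, trivial⟩
  · rintro ⟨⟨a, b⟩, ⟨⟨w, x⟩, ⟨y, z⟩⟩⟩ hmem
    simp only [Finset.mem_sigma, Finset.mem_product, Finset.HasAntidiagonal.mem_antidiagonal] at hmem ⊢
    exact ⟨by omega, trivial, trivial⟩
  · rintro ⟨⟨a, b⟩, ⟨⟨w, x⟩, ⟨y, z⟩⟩⟩ hmem
    simp only [Finset.mem_sigma, Finset.mem_product, Finset.HasAntidiagonal.mem_antidiagonal] at hmem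
    obtain ⟨h1, h2, h3⟩ := hmem
    subst h2; subst h3
    rfl
  · rintro ⟨⟨a, b⟩, ⟨⟨w, x⟩, ⟨y, z⟩⟩⟩ hmem
    simp only [Finset.mem_sigma, Finset.mem_product, Finset.HasAntidiagonal.mem_antidiagonal] at hmem
    obtain ⟨h1, h2, h3⟩ := hmem
    subst h2; subst h3
    rfl
  · rintro ⟨⟨a, b⟩, ⟨⟨w, x⟩, ⟨y, z⟩⟩⟩ _
    rfl

/-- `D` extended coefficientwise-convolutionwise to power series -/
def hatD (D : ℕ → Module.End ℚ ExtV) (f : PowerSeries ExtV) : PowerSeries ExtV :=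
  PowerSeries.mk fun m => ∑ p ∈ antidiagonal m, D p.1 ((PowerSeries.coeff p.2) f)

lemma coeff_hatD (D : ℕ → Module.End ℚ ExtV) (f : PowerSeries ExtV) (m : ℕ) :
    (PowerSeries.coeff m) (hatD D f)
      = ∑ p ∈ antidiagonal m, D p.1 ((PowerSeries.coeff p.2) f) :=
  PowerSeries.coeff_mk m _

lemma hatD_add (D : ℕ → Module.End ℚ ExtV) (f g : PowerSeries ExtV) :
    hatD D (f + g) = hatD D f + hatD D g := by
  ext n
  simp only [coeff_hatD, map_add, Finset.sum_add_distrib]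

lemma hatD_sub (D : ℕ → Module.End ℚ ExtV) (f g : PowerSeries ExtV) :
    hatD D (f - g) = hatD D f - hatD D g := by
  ext n
  simp only [coeff_hatD, map_sub, Finset.sum_sub_distrib]

lemma hatD_mul {D : ℕ → Module.End ℚ ExtV} (hD : IsHSFamily D) (f g : PowerSeries ExtV) :
    hatD D (f * g) = hatD D f * hatD D g := by
  ext n
  rw [PowerSeries.coeff_mul, coeff_hatD]
  have lhs : ∀ p : ℕ × ℕ, D p.1 ((PowerSeries.coeff p.2) (f * g))
      = ∑ q ∈ antidiagonal p.1, ∑ s ∈ antidiagonal p.2,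
          D q.1 ((PowerSeries.coeff s.1) f) * D q.2 ((PowerSeries.coeff s.2) g) := by
    intro p
    rw [PowerSeries.coeff_mul, map_sum]
    rw [Finset.sum_congr rfl fun s _ =>
      hD.1 p.1 ((PowerSeries.coeff s.1) f) ((PowerSeries.coeff s.2) g)]
    exact Finset.sum_comm
  rw [Finset.sum_congr rfl fun p _ => lhs p]
  rw [sum4 n (fun i1 i2 a b => D i1 ((PowerSeries.coeff a) f) * D i2 ((PowerSeries.coeff b) g))]
  refine Finset.sum_congr rfl fun p _ => ?_
  rw [coeff_hatD, coeff_hatD, Finset.sum_mul_sum]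

/-- the series `∑ D m u t^m` -/
def serD (D : ℕ → Module.End ℚ ExtV) (u : ExtV) : PowerSeries ExtV :=
  PowerSeries.mk fun m => D m u

lemma coeff_serD (D : ℕ → Module.End ℚ ExtV) (u : ExtV) (m : ℕ) :
    (PowerSeries.coeff m) (serD D u) = D m u := PowerSeries.coeff_mk m _

lemma serD_mul {D : ℕ → Module.End ℚ ExtV} (hD : IsHSFamily D) (u w : ExtV) :
    serD D (u * w) = serD D u * serD D w := by
  ext n
  rw [PowerSeries.coeff_mul, coeff_serD, hD.1 n u w]
  exact Finset.sum_congr rfl fun p _ => by rw [coeff_serD, coeff_serD]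

lemma serD_add (D : ℕ → Module.End ℚ ExtV) (u w : ExtV) :
    serD D (u + w) = serD D u + serD D w := by
  ext n
  simp only [coeff_serD, map_add]

/-- the scalar series `β(t) v = ∑ β_m(v) t^m` -/
def betaSer (v : Vb) : PowerSeries ExtV :=
  PowerSeries.mk fun m => algebraMap ℚ ExtV (betaF m v)

lemma coeff_betaSer (v : Vb) (m : ℕ) :
    (PowerSeries.coeff m) (betaSer v) = algebraMap ℚ ExtV (betaF m v) :=
  PowerSeries.coeff_mk m _

lemma hatD_betaSer {D : ℕ → Module.End ℚ ExtV} (hD : IsHSFamily D) (v : Vb) :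
    hatD D (betaSer v) = betaSer v := by
  ext m
  rw [coeff_hatD, coeff_betaSer]
  have hterm : ∀ p : ℕ × ℕ, D p.1 ((PowerSeries.coeff p.2) (betaSer v))
      = if p.1 = 0 then algebraMap ℚ ExtV (betaF p.2 v) else 0 := by
    intro p
    rw [coeff_betaSer, Algebra.algebraMap_eq_smul_one, map_smul, hD.2]
    by_cases h : p.1 = 0 <;> simp [h, Algebra.algebraMap_eq_smul_one]
  rw [Finset.sum_congr rfl fun p _ => hterm p]
  rw [Finset.sum_eq_single_of_mem ((0 : ℕ), m) (by simp)]
  · rw [if_pos rfl]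
  · rintro ⟨a, b⟩ hab hne
    rw [Finset.HasAntidiagonal.mem_antidiagonal] at hab
    rw [if_neg]
    intro h0
    exact hne (by simp only at h0 hab; subst h0; simp only [Nat.zero_add] at hab; subst hab; rfl)

-- PART 3

lemma hatSb_serSm_iota {Sm Sbm : ℕ → Module.End ℚ ExtV}
    (hSm : IsSigmaMinus Sm) (hSbm : IsSigmaBarMinus Sbm) (v : Vb) :
    hatD Sbm (serD Sm (ExteriorAlgebra.ι ℚ v))
      = PowerSeries.C (ExteriorAlgebra.ι ℚ v) := by
  ext m
  rw [coeff_hatD, PowerSeries.coeff_C]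
  have hterm : ∀ p : ℕ × ℕ,
      Sbm p.1 ((PowerSeries.coeff p.2) (serD Sm (ExteriorAlgebra.ι ℚ v)))
      = if p.1 = 0 then ExteriorAlgebra.ι ℚ (shiftV p.2 v)
        else if p.1 = 1 then -(ExteriorAlgebra.ι ℚ (shiftV (p.2 + 1) v)) else 0 := by
    intro p
    rw [coeff_serD, Sm_iota hSm, Sbm_iota hSbm, shiftV_shiftV]
  rw [Finset.sum_congr rfl fun p _ => hterm p]
  rcases Nat.eq_zero_or_pos m with hm | hm
  · subst hm
    simp [shiftV_zero]
  · rw [if_neg (by omega), Finset.Nat.sum_antidiagonal_eq_sum_range_succ_mk]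
    rw [← Finset.sum_subset (Finset.range_subset_range.2 (show 2 ≤ m + 1 by omega))]
    · rw [Finset.sum_range_succ, Finset.sum_range_one]
      simp only [if_pos rfl, if_neg one_ne_zero, Nat.sub_zero]
      rw [show m - 1 + 1 = m by omega]
      exact add_neg_cancel _
    · intro i hi hni
      simp only [Finset.mem_range] at hi hni
      rw [if_neg (by omega), if_neg (by omega)]

lemma hatSb_serSm {Sm Sbm : ℕ → Module.End ℚ ExtV}
    (hSm : IsSigmaMinus Sm) (hSbm : IsSigmaBarMinus Sbm) (u : ExtV) :
    hatD Sbm (serD Sm u) = PowerSeries.C u := by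
  induction u using ExteriorAlgebra.induction with
  | algebraMap q =>
    ext m
    rw [coeff_hatD, PowerSeries.coeff_C]
    have hterm : ∀ p : ℕ × ℕ,
        Sbm p.1 ((PowerSeries.coeff p.2) (serD Sm (algebraMap ℚ ExtV q)))
        = if p.2 = 0 ∧ p.1 = 0 then algebraMap ℚ ExtV q else 0 := by
      intro p
      rw [coeff_serD, Algebra.algebraMap_eq_smul_one, map_smul, hSm.1.2, smul_ite, smul_zero,
        apply_ite (Sbm p.1), map_zero, map_smul, hSbm.1.2]
      by_cases h2 : p.2 = 0 <;> by_cases h1 : p.1 = 0 <;>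
        simp [h1, h2, Algebra.algebraMap_eq_smul_one]
    rw [Finset.sum_congr rfl fun p _ => hterm p]
    rcases Nat.eq_zero_or_pos m with hm | hm
    · subst hm; simp
    · rw [if_neg (by omega), Finset.sum_eq_zero]
      rintro ⟨p1, p2⟩ hp
      rw [Finset.HasAntidiagonal.mem_antidiagonal] at hp
      rw [if_neg (by omega)]
  | ι v => exact hatSb_serSm_iota hSm hSbm v
  | mul a b ha hb =>
    rw [serD_mul hSm.1, hatD_mul hSbm.1, ha, hb, ← map_mul]
  | add a b ha hb =>
    rw [serD_add, hatD_add, ha, hb, ← map_add]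


/-- `β(w^{-1}) ⌟ u = σ̄₋(w) (β₀ ⌟ σ₋(w) u)` for `u ∈ ⋀^r V`,
coefficientwise in the variable `t = w^{-1}`. -/
theorem beta_series_eq_sbarMinus_beta0_sigmaMinus
    (Sm Sbm : ℕ → Module.End ℚ ExtV)
    (hSm : IsSigmaMinus Sm) (hSbm : IsSigmaBarMinus Sbm)
    (r : ℕ) (u : ExtV)
    (hu : u ∈ (LinearMap.range (ExteriorAlgebra.ι ℚ : Vb →ₗ[ℚ] ExtV)) ^ r) :
    (PowerSeries.mk fun m => ctr m u : PowerSeries ExtV)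
    = PowerSeries.mk fun m =>
        ∑ p ∈ Finset.HasAntidiagonal.antidiagonal m, Sbm p.1 (ctr 0 (Sm p.2 u)) := by
  have main : (PowerSeries.mk fun m => ctr m u)
      = hatD Sbm (PowerSeries.mk fun m => ctr 0 (Sm m u)) := by
    refine Submodule.pow_induction_on_left
      (M := LinearMap.range (ExteriorAlgebra.ι ℚ : Vb →ₗ[ℚ] ExtV))
      (C := fun w => (PowerSeries.mk fun m => ctr m w)
        = hatD Sbm (PowerSeries.mk fun m => ctr 0 (Sm m w))) ?_ ?_ ?_ hu
    · intro q
      have h0 : ∀ j : ℕ, ctr 0 (Sm j (algebraMap ℚ ExtV q)) = 0 := by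
        intro j
        rw [Algebra.algebraMap_eq_smul_one, map_smul, hSm.1.2, smul_ite, smul_zero,
          apply_ite (ctr 0), map_zero, map_smul, ctr_one, smul_zero, ite_self]
      ext n
      rw [PowerSeries.coeff_mk, coeff_hatD, ctr_algebraMap]
      rw [Finset.sum_eq_zero]
      rintro p -
      rw [PowerSeries.coeff_mk, h0, map_zero]
    · intro x y hx hy
      have e1 : (PowerSeries.mk fun m => ctr m (x + y))
          = (PowerSeries.mk fun m => ctr m x) + (PowerSeries.mk fun m => ctr m y) := by
        ext n; simp [map_add]
      have e2 : (PowerSeries.mk fun m => ctr 0 (Sm m (x + y)))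
          = (PowerSeries.mk fun m => ctr 0 (Sm m x))
            + (PowerSeries.mk fun m => ctr 0 (Sm m y)) := by
        ext n; simp [map_add]
      rw [e1, e2, hatD_add, hx, hy]
    · rintro mv hmv x ih
      obtain ⟨v, rfl⟩ := hmv
      have stepL : (PowerSeries.mk fun n => ctr n (ExteriorAlgebra.ι ℚ v * x))
          = betaSer v * PowerSeries.C x
            - PowerSeries.C (ExteriorAlgebra.ι ℚ v) * PowerSeries.mk fun n => ctr n x := by
        ext n
        rw [map_sub, PowerSeries.coeff_mk, ctr_iota_mul, PowerSeries.coeff_mul_C,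
          coeff_betaSer, PowerSeries.coeff_C_mul, PowerSeries.coeff_mk, Algebra.smul_def]
      have stepM : (PowerSeries.mk fun n => ctr 0 (Sm n (ExteriorAlgebra.ι ℚ v * x)))
          = betaSer v * serD Sm x
            - serD Sm (ExteriorAlgebra.ι ℚ v) * PowerSeries.mk fun n => ctr 0 (Sm n x) := by
        ext n
        rw [map_sub, PowerSeries.coeff_mul, PowerSeries.coeff_mul, PowerSeries.coeff_mk]
        rw [hSm.1.1 n (ExteriorAlgebra.ι ℚ v) x, map_sum]
        rw [← Finset.sum_sub_distrib]
        refine Finset.sum_congr rfl fun p _ => ?_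
        rw [Sm_iota hSm, ctr_iota_mul, beta_shift, Algebra.smul_def, ← Sm_iota hSm,
          coeff_betaSer, coeff_serD, coeff_serD, PowerSeries.coeff_mk]
      calc (PowerSeries.mk fun n => ctr n (ExteriorAlgebra.ι ℚ v * x))
          = betaSer v * PowerSeries.C x
            - PowerSeries.C (ExteriorAlgebra.ι ℚ v) * PowerSeries.mk fun n => ctr n x :=
            stepL
        _ = hatD Sbm (betaSer v * serD Sm x
              - serD Sm (ExteriorAlgebra.ι ℚ v) * PowerSeries.mk fun n => ctr 0 (Sm n x)) := by
            rw [hatD_sub, hatD_mul hSbm.1, hatD_mul hSbm.1, hatD_betaSer hSbm.1,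
              hatSb_serSm hSm hSbm x, hatSb_serSm_iota hSm hSbm v, ih]
        _ = hatD Sbm (PowerSeries.mk fun n => ctr 0 (Sm n (ExteriorAlgebra.ι ℚ v * x))) := by
            rw [stepM]
  rw [main]
  ext n
  rw [coeff_hatD, PowerSeries.coeff_mk]
  exact Finset.sum_congr rfl fun p _ => by rw [PowerSeries.coeff_mk]
end
end

section
/- For all u ∈ ⋀^r V, β_0 ⌟ σ_-(w) σ̄_+(z) u = (1 − z/w) σ̄_+(z)(β_0 ⌟ σ_-(w) u). -/
noncomputable section
open Finset

-- ### basic facts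
lemma bv_mul_bv_anticomm (k l : ℕ) (y : ExtV) : bv k * (bv l * y) = -(bv l * (bv k * y)) := by
  have h := ExteriorAlgebra.ι_add_mul_swap (R := ℚ) (Finsupp.single k (1:ℚ)) (Finsupp.single l (1:ℚ))
  have : bv k * bv l = -(bv l * bv k) := by
    rw [eq_neg_iff_add_eq_zero]
    simpa [bv, add_comm] using h
  rw [← mul_assoc, ← mul_assoc, this, neg_mul]

lemma bv_mul_bv_self (k : ℕ) (y : ExtV) : bv k * (bv k * y) = 0 := by
  rw [← mul_assoc, bv, ExteriorAlgebra.ι_sq_zero, zero_mul]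

lemma ctr0_bv_mul (l : ℕ) (x : ExtV) :
    ctr 0 (bv l * x) = (if l = 0 then x else 0) - bv l * ctr 0 x := by
  have h := CliffordAlgebra.contractLeft_ι_mul (Q := (0 : QuadraticForm ℚ Vb)) (d := betaF 0)
    (Finsupp.single l (1:ℚ)) x
  rw [ctr, bv]
  rw [show (ExteriorAlgebra.ι ℚ : Vb →ₗ[ℚ] ExtV) = CliffordAlgebra.ι (0 : QuadraticForm ℚ Vb) from rfl] at *
  rw [h]
  congr 1
  have : betaF 0 (Finsupp.single l (1:ℚ)) = if l = 0 then 1 else 0 := by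
    simp [betaF, Finsupp.single_apply]
  rw [this]
  split <;> simp

lemma ctr0_one : ctr 0 (1 : ExtV) = 0 :=
  CliffordAlgebra.contractLeft_one (0 : QuadraticForm ℚ Vb) (betaF 0)

lemma ctr0_algebraMap (r : ℚ) : ctr 0 (algebraMap ℚ ExtV r) = 0 :=
  CliffordAlgebra.contractLeft_algebraMap (0 : QuadraticForm ℚ Vb) (betaF 0) r

-- ### sum helpers
lemma sum_norm {N : ℕ} {f g : ℕ → ExtV} (h : ∀ p, p < N → f p = g p) :
    ∑ p ∈ range N, f p = ∑ p ∈ range N, g p :=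
  Finset.sum_congr rfl fun p hp => h p (mem_range.mp hp)

lemma sum_ite_le_succ (N j : ℕ) (g : ℕ → ExtV) :
    ∑ i ∈ range N, (if i ≤ j + 1 then g i else 0)
    = (∑ i ∈ range N, if i ≤ j then g i else 0) + (if j + 1 < N then g (j+1) else 0) := by
  have h : ∀ i, i < N → (if i ≤ j+1 then g i else 0)
      = (if i ≤ j then g i else 0) + (if i = j+1 then g i else 0) := by
    intro i _
    by_cases h1 : i ≤ j
    · rw [if_pos (by omega), if_pos h1, if_neg (by omega), add_zero]
    · by_cases h2 : i = j+1
      · subst h2; rw [if_pos le_rfl, if_neg h1, if_pos rfl, zero_add]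
      · rw [if_neg (by omega), if_neg h1, if_neg h2, add_zero]
  rw [sum_norm h, Finset.sum_add_distrib, Finset.sum_ite_eq' (range N) (j+1)]
  simp [Finset.mem_range]

lemma sum_range_succ_pred (a : ℕ) (g : ℕ → ExtV) :
    ∑ p ∈ range (a+1), (if p < a then g p else 0) = ∑ p ∈ range a, g p := by
  rw [Finset.sum_range_succ, if_neg (lt_irrefl a), add_zero]
  exact Finset.sum_congr rfl fun p hp => if_pos (Finset.mem_range.mp hp)

section ops
variable {Sm Sbp : ℕ → Module.End ℚ ExtV}

lemma hs_algebraMap {D : ℕ → Module.End ℚ ExtV} (hD : IsHSFamily D) (c : ℕ) (r : ℚ) :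
    D c (algebraMap ℚ ExtV r) = if c = 0 then algebraMap ℚ ExtV r else 0 := by
  rw [Algebra.algebraMap_eq_smul_one, map_smul, hD.2]
  split <;> simp [Algebra.algebraMap_eq_smul_one]

lemma sbp_bv_mul (hSbp : IsSigmaBarPlus Sbp) (n j : ℕ) (x : ExtV) :
    Sbp n (bv j * x) = bv j * Sbp n x - (if n = 0 then 0 else bv (j+1) * Sbp (n-1) x) := by
  rw [hSbp.1.1, Finset.Nat.sum_antidiagonal_eq_sum_range_succ_mk]
  have h : ∀ i, i < n + 1 → Sbp i (bv j) * Sbp (n - i) x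
      = (if i = 0 then bv j * Sbp n x else 0)
        + (if i = 1 then -(bv (j+1) * Sbp (n-1) x) else 0) := by
    intro i _
    rw [hSbp.2]
    rcases i with _ | _ | i <;> simp
  rw [sum_norm h, Finset.sum_add_distrib, Finset.sum_ite_eq' (range (n+1)) 0,
    Finset.sum_ite_eq' (range (n+1)) 1]
  rcases n with _ | n <;> simp [sub_eq_add_neg]

lemma sbp_bv_mul_succ (hSbp : IsSigmaBarPlus Sbp) (n j : ℕ) (x : ExtV) :
    Sbp (n+1) (bv j * x) = bv j * Sbp (n+1) x - bv (j+1) * Sbp n x := by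
  rw [sbp_bv_mul hSbp]; simp

lemma sbp_bv_mul_zero (hSbp : IsSigmaBarPlus Sbp) (j : ℕ) (x : ExtV) :
    Sbp 0 (bv j * x) = bv j * Sbp 0 x := by
  rw [sbp_bv_mul hSbp]; simp

lemma sm_bv_mul (hSm : IsSigmaMinus Sm) (m k : ℕ) (x : ExtV) :
    Sm m (bv k * x) = ∑ i ∈ range (m+1), (if i ≤ k then bv (k - i) * Sm (m - i) x else 0) := by
  rw [hSm.1.1, Finset.Nat.sum_antidiagonal_eq_sum_range_succ_mk]
  refine sum_norm fun i _ => ?_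
  rw [hSm.2]
  split <;> simp

lemma ctrSm_bv_mul (hSm : IsSigmaMinus Sm) (m k : ℕ) (x : ExtV) :
    ctr 0 (Sm m (bv k * x)) = (if k ≤ m then Sm (m - k) x else 0)
      - ∑ i ∈ range (m+1), (if i ≤ k then bv (k - i) * ctr 0 (Sm (m - i) x) else 0) := by
  rw [sm_bv_mul hSm, map_sum]
  have h : ∀ i, i < m + 1 → ctr 0 (if i ≤ k then bv (k - i) * Sm (m - i) x else 0)
      = (if i = k then Sm (m - i) x else 0)
        - (if i ≤ k then bv (k - i) * ctr 0 (Sm (m - i) x) else 0) := by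
    intro i _
    by_cases h1 : i ≤ k
    · rw [if_pos h1, if_pos h1, ctr0_bv_mul]
      congr 1
      by_cases h2 : i = k
      · rw [if_pos (by omega : k - i = 0), if_pos h2]
      · rw [if_neg (by omega : ¬ k - i = 0), if_neg h2]
    · rw [if_neg h1, if_neg h1, if_neg (by omega), map_zero, sub_zero]
  rw [sum_norm h, Finset.sum_sub_distrib, Finset.sum_ite_eq' (range (m+1)) k]
  congr 2
  simp [Finset.mem_range, Nat.lt_succ_iff]

end ops

section main
variable {Sm Sbp : ℕ → Module.End ℚ ExtV}

/-- joint commutation statement: Q-part and P-part -/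
def GoodPair (Sm Sbp : ℕ → Module.End ℚ ExtV) (x : ExtV) : Prop := ∀ a c : ℕ,
  Sm a (Sbp c x) = Sbp c (Sm a x)
      - (if a = 0 ∨ c = 0 then 0 else bv 0 * Sbp (c-1) (ctr 0 (Sm (a-1) x))) ∧
  ctr 0 (Sm a (Sbp c x)) = Sbp c (ctr 0 (Sm a x))
      - (if a = 0 ∨ c = 0 then 0 else Sbp (c-1) (ctr 0 (Sm (a-1) x)))

lemma GoodPair.add {x y : ExtV} (hx : GoodPair Sm Sbp x) (hy : GoodPair Sm Sbp y) :
    GoodPair Sm Sbp (x + y) := by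
  intro a c
  obtain ⟨hx1, hx2⟩ := hx a c
  obtain ⟨hy1, hy2⟩ := hy a c
  constructor
  · by_cases h : a = 0 ∨ c = 0
    · simp only [map_add, hx1, hy1, if_pos h, sub_zero]
    · simp only [map_add, hx1, hy1, if_neg h, mul_add]; abel
  · by_cases h : a = 0 ∨ c = 0
    · simp only [map_add, hx2, hy2, if_pos h, sub_zero]
    · simp only [map_add, hx2, hy2, if_neg h]; abel

lemma GoodPair.smul {x : ExtV} (r : ℚ) (hx : GoodPair Sm Sbp x) :
    GoodPair Sm Sbp (r • x) := by
  intro a c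
  obtain ⟨hx1, hx2⟩ := hx a c
  constructor
  · by_cases h : a = 0 ∨ c = 0
    · simp only [map_smul, hx1, if_pos h, sub_zero]
    · simp only [map_smul, hx1, if_neg h, smul_sub, mul_smul_comm]
  · by_cases h : a = 0 ∨ c = 0
    · simp only [map_smul, hx2, if_pos h, sub_zero]
    · simp only [map_smul, hx2, if_neg h, smul_sub]

lemma GoodPair.zero : GoodPair Sm Sbp (0 : ExtV) := by
  intro a c
  constructor <;> simp

lemma GoodPair.algebraMap' (hSm : IsSigmaMinus Sm) (hSbp : IsSigmaBarPlus Sbp) (r : ℚ) :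
    GoodPair Sm Sbp (algebraMap ℚ ExtV r) := by
  have hc : ∀ b, ctr 0 (Sm b (algebraMap ℚ ExtV r)) = 0 := by
    intro b; rw [hs_algebraMap hSm.1]; split
    · exact ctr0_algebraMap r
    · exact map_zero _
  have hI : ∀ b : ℕ, ctr 0 (if b = 0 then algebraMap ℚ ExtV r else (0:ExtV)) = 0 := by
    intro b; split
    · exact ctr0_algebraMap r
    · exact map_zero _
  intro a c
  constructor
  · rw [hs_algebraMap hSbp.1, hs_algebraMap hSm.1]
    rcases a with _ | a <;> rcases c with _ | c <;>
      simp [hs_algebraMap hSbp.1, hs_algebraMap hSm.1, hc, hI, ctr0_algebraMap]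
  · rw [hs_algebraMap hSbp.1]
    rcases a with _ | a <;> rcases c with _ | c <;>
      simp [hs_algebraMap hSbp.1, hs_algebraMap hSm.1, hc, hI, ctr0_algebraMap]

end main

section step
variable {Sm Sbp : ℕ → Module.End ℚ ExtV}

set_option maxHeartbeats 1000000 in
lemma step_Q_main (hSm : IsSigmaMinus Sm) (hSbp : IsSigmaBarPlus Sbp) {x : ExtV}
    (hx : GoodPair Sm Sbp x) (j A C : ℕ) :
    Sm (A+1) (Sbp (C+1) (bv j * x)) = Sbp (C+1) (Sm (A+1) (bv j * x))
      - bv 0 * Sbp C (ctr 0 (Sm A (bv j * x))) := by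
  have hQ : ∀ a c : ℕ, Sm a (Sbp c x) = Sbp c (Sm a x)
      - (if a = 0 ∨ c = 0 then 0 else bv 0 * Sbp (c-1) (ctr 0 (Sm (a-1) x))) :=
    fun a c => (hx a c).1
  -- atoms
  set fa : ℕ → ExtV := fun p => if p ≤ j then bv (j-p) * Sbp (C+1) (Sm (A+1-p) x) else 0 with hfa
  set fb : ℕ → ExtV := fun p =>
    if p ≤ j ∧ p < A+1 then bv 0 * (bv (j-p) * Sbp C (ctr 0 (Sm (A-p) x))) else 0 with hfb
  set fc : ℕ → ExtV := fun p => if p ≤ j+1 then bv (j+1-p) * Sbp C (Sm (A+1-p) x) else 0 with hfc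
  set fd : ℕ → ExtV := fun p =>
    if p ≤ j+1 ∧ p < A+1 ∧ ¬ C = 0 then bv 0 * (bv (j+1-p) * Sbp (C-1) (ctr 0 (Sm (A-p) x))) else 0
    with hfd
  set fc' : ℕ → ExtV := fun p => if p ≤ j then bv (j+1-p) * Sbp C (Sm (A+1-p) x) else 0 with hfc'
  set T : ExtV := (if j ≤ A then bv 0 * Sbp C (Sm (A-j) x) else 0) with hT
  set g : ℕ → ExtV := fun i =>
    if i ≤ j then bv 0 * (bv (j-i) * Sbp C (ctr 0 (Sm (A-i) x))) else 0 with hg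
  set h : ℕ → ExtV := fun i =>
    if i ≤ j ∧ ¬ C = 0 then bv 0 * (bv (j+1-i) * Sbp (C-1) (ctr 0 (Sm (A-i) x))) else 0 with hh
  -- LHS expansion
  have eL : Sm (A+1) (Sbp (C+1) (bv j * x))
      = (∑ p ∈ range (A+2), fa p) + (∑ p ∈ range (A+2), fb p)
        - ((∑ p ∈ range (A+2), fc p) + (∑ p ∈ range (A+2), fd p)) := by
    rw [sbp_bv_mul_succ hSbp, map_sub, sm_bv_mul hSm, sm_bv_mul hSm]
    congr 1
    · rw [← Finset.sum_add_distrib]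
      refine sum_norm fun p hp => ?_
      rw [hQ (A+1-p) (C+1)]
      by_cases h1 : p ≤ j
      · rw [if_pos h1, hfa, hfb]
        simp only [if_pos h1]
        by_cases h2 : p < A+1
        · rw [if_neg (by omega : ¬ (A+1-p = 0 ∨ C+1 = 0)), if_pos (And.intro h1 h2),
            (by omega : A+1-p-1 = A-p), (by omega : C+1-1 = C), mul_sub, bv_mul_bv_anticomm,
            sub_neg_eq_add]
        · rw [if_pos (by omega : A+1-p = 0 ∨ C+1 = 0), sub_zero, if_neg (by simp [h2]), add_zero]
      · rw [if_neg h1, hfa, hfb]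
        simp only [if_neg h1, if_neg (by simp [h1] : ¬ (p ≤ j ∧ p < A+1)), add_zero]
    · rw [← Finset.sum_add_distrib]
      refine sum_norm fun p hp => ?_
      rw [hQ (A+1-p) C]
      by_cases h1 : p ≤ j+1
      · rw [if_pos h1, hfc, hfd]
        simp only [if_pos h1]
        by_cases h2 : p < A+1 ∧ ¬ C = 0
        · rw [if_neg (by omega : ¬ (A+1-p = 0 ∨ C = 0)), if_pos (And.intro h1 ⟨h2.1, h2.2⟩),
            (by omega : A+1-p-1 = A-p), mul_sub, bv_mul_bv_anticomm, sub_neg_eq_add]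
        · rw [if_pos (by omega : A+1-p = 0 ∨ C = 0), sub_zero, if_neg (by tauto), add_zero]
      · rw [if_neg h1, hfc, hfd]
        simp only [if_neg h1, if_neg (by simp [h1] : ¬ (p ≤ j+1 ∧ p < A+1 ∧ ¬ C = 0)), add_zero]
  -- RHS expansion
  have eR1 : Sbp (C+1) (Sm (A+1) (bv j * x))
      = (∑ p ∈ range (A+2), fa p) - (∑ p ∈ range (A+2), fc' p) := by
    rw [sm_bv_mul hSm, map_sum, ← Finset.sum_sub_distrib]
    refine sum_norm fun p hp => ?_
    by_cases h1 : p ≤ j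
    · rw [if_pos h1, sbp_bv_mul_succ hSbp, hfa, hfc']
      simp only [if_pos h1]
      rw [(by omega : j - p + 1 = j + 1 - p)]
    · rw [if_neg h1, map_zero, hfa, hfc']
      simp only [if_neg h1, sub_zero]
  have eR2 : bv 0 * Sbp C (ctr 0 (Sm A (bv j * x)))
      = T - ((∑ i ∈ range (A+1), g i) - (∑ i ∈ range (A+1), h i)) := by
    rw [ctrSm_bv_mul hSm, map_sub, map_sum, mul_sub, Finset.mul_sum]
    congr 1
    · rw [hT]
      by_cases h1 : j ≤ A
      · rw [if_pos h1, if_pos h1]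
      · rw [if_neg h1, if_neg h1, map_zero, mul_zero]
    · rw [← Finset.sum_sub_distrib]
      refine sum_norm fun i hi => ?_
      by_cases h1 : i ≤ j
      · rw [if_pos h1, sbp_bv_mul hSbp, hg, hh]
        simp only [if_pos h1]
        rw [mul_sub]
        congr 1
        by_cases h2 : C = 0
        · rw [if_pos h2, mul_zero, if_neg (by tauto)]
        · rw [if_neg h2, if_pos (And.intro h1 h2), (by omega : j - i + 1 = j + 1 - i)]
      · rw [if_neg h1, map_zero, mul_zero, hg, hh]
        simp only [if_neg h1, if_neg (by simp [h1] : ¬ (i ≤ j ∧ ¬ C = 0)), sub_zero]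
  -- bridging
  have F1 : (∑ p ∈ range (A+2), fc p) = (∑ p ∈ range (A+2), fc' p) + T := by
    rw [hfc, sum_ite_le_succ (A+2) j (fun p => bv (j+1-p) * Sbp C (Sm (A+1-p) x))]
    congr 1
    rw [hT]
    by_cases h1 : j ≤ A
    · rw [if_pos (by omega : j + 1 < A+2), if_pos h1, Nat.sub_self,
        (by omega : A+1-(j+1) = A-j)]
    · rw [if_neg (by omega : ¬ j + 1 < A+2), if_neg h1]
  have F2 : (∑ p ∈ range (A+2), fb p) = ∑ i ∈ range (A+1), g i := by
    have e1 : ∀ p, p < A+2 → fb p = (if p < A+1 then g p else 0) := by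
      intro p hp
      simp only [hfb, hg]
      split_ifs <;> first | rfl | omega
    rw [sum_norm e1, sum_range_succ_pred]
  have F3 : (∑ p ∈ range (A+2), fd p) = ∑ i ∈ range (A+1), h i := by
    have e1 : ∀ p, p < A+2 → fd p
        = (if p ≤ j+1 then (if p < A+1 ∧ ¬ C = 0
            then bv 0 * (bv (j+1-p) * Sbp (C-1) (ctr 0 (Sm (A-p) x))) else 0) else 0) := by
      intro p hp
      simp only [hfd]
      split_ifs <;> first | rfl | omega | tauto
    rw [sum_norm e1, sum_ite_le_succ]
    have e2 : (if j + 1 < A + 2 then (if j+1 < A+1 ∧ ¬ C = 0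
        then bv 0 * (bv (j+1-(j+1)) * Sbp (C-1) (ctr 0 (Sm (A-(j+1)) x))) else 0) else 0)
        = (0 : ExtV) := by
      rw [Nat.sub_self, bv_mul_bv_self]
      simp
    rw [e2, add_zero]
    have e4 : ∀ p, p < A+2 → (if p ≤ j then (if p < A+1 ∧ ¬ C = 0
        then bv 0 * (bv (j+1-p) * Sbp (C-1) (ctr 0 (Sm (A-p) x))) else 0) else 0)
        = (if p < A+1 then h p else 0) := by
      intro p hp
      simp only [hh]
      split_ifs <;> first | rfl | omega
    rw [sum_norm e4, sum_range_succ_pred]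
  rw [eL, eR1, eR2, F1, F2, F3]
  abel

lemma step_Q_c0 (hSm : IsSigmaMinus Sm) (hSbp : IsSigmaBarPlus Sbp) {x : ExtV}
    (hx : GoodPair Sm Sbp x) (j a : ℕ) :
    Sm a (Sbp 0 (bv j * x)) = Sbp 0 (Sm a (bv j * x)) := by
  have hQ0 : ∀ b, Sm b (Sbp 0 x) = Sbp 0 (Sm b x) := by
    intro b; have := (hx b 0).1; simpa using this
  rw [sbp_bv_mul_zero hSbp, sm_bv_mul hSm, sm_bv_mul hSm, map_sum]
  refine sum_norm fun p hp => ?_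
  by_cases h1 : p ≤ j
  · rw [if_pos h1, if_pos h1, hQ0, sbp_bv_mul_zero hSbp]
  · rw [if_neg h1, if_neg h1, map_zero]

lemma step_Q_a0 (hSm : IsSigmaMinus Sm) (hSbp : IsSigmaBarPlus Sbp) {x : ExtV}
    (hx : GoodPair Sm Sbp x) (j C : ℕ) :
    Sm 0 (Sbp (C+1) (bv j * x)) = Sbp (C+1) (Sm 0 (bv j * x)) := by
  have hQ0 : ∀ c, Sm 0 (Sbp c x) = Sbp c (Sm 0 x) := by
    intro c; have := (hx 0 c).1; simpa using this
  rw [sbp_bv_mul_succ hSbp, map_sub, sm_bv_mul hSm, sm_bv_mul hSm, sm_bv_mul hSm]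
  simp only [Nat.zero_add, Finset.sum_range_one, Nat.sub_zero, Nat.zero_le, if_pos,
    Nat.sub_self]
  rw [hQ0, hQ0, sbp_bv_mul_succ hSbp]

lemma step_Q (hSm : IsSigmaMinus Sm) (hSbp : IsSigmaBarPlus Sbp) {x : ExtV}
    (hx : GoodPair Sm Sbp x) (j a c : ℕ) :
    Sm a (Sbp c (bv j * x)) = Sbp c (Sm a (bv j * x))
      - (if a = 0 ∨ c = 0 then 0 else bv 0 * Sbp (c-1) (ctr 0 (Sm (a-1) (bv j * x)))) := by
  rcases a with _ | A
  · rw [if_pos (Or.inl rfl), sub_zero]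
    rcases c with _ | C
    · exact step_Q_c0 hSm hSbp hx j 0
    · exact step_Q_a0 hSm hSbp hx j C
  · rcases c with _ | C
    · rw [if_pos (Or.inr rfl), sub_zero]
      exact step_Q_c0 hSm hSbp hx j (A+1)
    · rw [if_neg (by omega)]
      exact step_Q_main hSm hSbp hx j A C

lemma step_P_c0 (hSm : IsSigmaMinus Sm) (hSbp : IsSigmaBarPlus Sbp) {x : ExtV}
    (hx : GoodPair Sm Sbp x) (j a : ℕ) :
    ctr 0 (Sm a (Sbp 0 (bv j * x))) = Sbp 0 (ctr 0 (Sm a (bv j * x))) := by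
  have hQ0 : ∀ b, Sm b (Sbp 0 x) = Sbp 0 (Sm b x) := by
    intro b; have := (hx b 0).1; simpa using this
  have hP0 : ∀ b, ctr 0 (Sm b (Sbp 0 x)) = Sbp 0 (ctr 0 (Sm b x)) := by
    intro b; have := (hx b 0).2; simpa using this
  rw [sbp_bv_mul_zero hSbp, ctrSm_bv_mul hSm, ctrSm_bv_mul hSm, map_sub, map_sum]
  congr 1
  · by_cases h1 : j ≤ a
    · rw [if_pos h1, if_pos h1, hQ0]
    · rw [if_neg h1, if_neg h1, map_zero]
  · refine sum_norm fun i hi => ?_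
    by_cases h1 : i ≤ j
    · rw [if_pos h1, if_pos h1, hP0, sbp_bv_mul_zero hSbp]
    · rw [if_neg h1, if_neg h1, map_zero]

lemma step_P_a0 (hSm : IsSigmaMinus Sm) (hSbp : IsSigmaBarPlus Sbp) {x : ExtV}
    (hx : GoodPair Sm Sbp x) (j C : ℕ) :
    ctr 0 (Sm 0 (Sbp (C+1) (bv j * x))) = Sbp (C+1) (ctr 0 (Sm 0 (bv j * x))) := by
  have hQ0 : ∀ c, Sm 0 (Sbp c x) = Sbp c (Sm 0 x) := by
    intro c; have := (hx 0 c).1; simpa using this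
  have hP0 : ∀ c, ctr 0 (Sm 0 (Sbp c x)) = Sbp c (ctr 0 (Sm 0 x)) := by
    intro c; have := (hx 0 c).2; simpa using this
  rw [sbp_bv_mul_succ hSbp, map_sub, map_sub, ctrSm_bv_mul hSm, ctrSm_bv_mul hSm,
    ctrSm_bv_mul hSm]
  simp only [Nat.zero_add, Finset.sum_range_one, Nat.sub_zero, Nat.zero_le, if_pos,
    Nat.le_zero, Nat.sub_self]
  rw [if_neg (Nat.succ_ne_zero j), zero_sub, sub_neg_eq_add, hP0, hP0]
  by_cases hj : j = 0
  · subst hj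
    simp only [Nat.sub_zero, if_pos rfl, ↓reduceIte]
    rw [hQ0, map_sub, sbp_bv_mul_succ hSbp]
    abel
  · rw [if_neg hj, if_neg hj, map_sub, map_zero, sbp_bv_mul_succ hSbp]
    abel

set_option maxHeartbeats 1000000 in
lemma step_P_main (hSm : IsSigmaMinus Sm) (hSbp : IsSigmaBarPlus Sbp) {x : ExtV}
    (hx : GoodPair Sm Sbp x) (j A C : ℕ) :
    ctr 0 (Sm (A+1) (Sbp (C+1) (bv j * x))) = Sbp (C+1) (ctr 0 (Sm (A+1) (bv j * x)))
      - Sbp C (ctr 0 (Sm A (bv j * x))) := by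
  have hQ : ∀ a c : ℕ, Sm a (Sbp c x) = Sbp c (Sm a x)
      - (if a = 0 ∨ c = 0 then 0 else bv 0 * Sbp (c-1) (ctr 0 (Sm (a-1) x))) :=
    fun a c => (hx a c).1
  have hP : ∀ a c : ℕ, ctr 0 (Sm a (Sbp c x)) = Sbp c (ctr 0 (Sm a x))
      - (if a = 0 ∨ c = 0 then 0 else Sbp (c-1) (ctr 0 (Sm (a-1) x))) :=
    fun a c => (hx a c).2
  set T1 : ExtV := (if j ≤ A+1 then Sbp (C+1) (Sm (A+1-j) x) else 0) with hT1
  set T2 : ExtV := (if j ≤ A then bv 0 * Sbp C (ctr 0 (Sm (A-j) x)) else 0) with hT2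
  set T3 : ExtV := (if j ≤ A then Sbp C (Sm (A-j) x) else 0) with hT3
  set T4 : ExtV := (if j+1 ≤ A ∧ ¬ C = 0 then bv 0 * Sbp (C-1) (ctr 0 (Sm (A-(j+1)) x)) else 0)
    with hT4
  set s1 : ℕ → ExtV := fun i =>
    if i ≤ j then bv (j-i) * Sbp (C+1) (ctr 0 (Sm (A+1-i) x)) else 0 with hs1
  set s2 : ℕ → ExtV := fun i =>
    if i ≤ j ∧ i < A+1 then bv (j-i) * Sbp C (ctr 0 (Sm (A-i) x)) else 0 with hs2
  set s3 : ℕ → ExtV := fun i =>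
    if i ≤ j+1 then bv (j+1-i) * Sbp C (ctr 0 (Sm (A+1-i) x)) else 0 with hs3
  set s4 : ℕ → ExtV := fun i =>
    if (i ≤ j+1 ∧ i < A+1) ∧ ¬ C = 0 then bv (j+1-i) * Sbp (C-1) (ctr 0 (Sm (A-i) x)) else 0
    with hs4
  set s6 : ℕ → ExtV := fun i =>
    if i ≤ j then bv (j+1-i) * Sbp C (ctr 0 (Sm (A+1-i) x)) else 0 with hs6
  set s7 : ℕ → ExtV := fun i =>
    if i ≤ j then bv (j-i) * Sbp C (ctr 0 (Sm (A-i) x)) else 0 with hs7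
  set s8 : ℕ → ExtV := fun i =>
    if i ≤ j ∧ ¬ C = 0 then bv (j+1-i) * Sbp (C-1) (ctr 0 (Sm (A-i) x)) else 0 with hs8
  have eL : ctr 0 (Sm (A+1) (Sbp (C+1) (bv j * x)))
      = (T1 - T2) - ((∑ i ∈ range (A+2), s1 i) - (∑ i ∈ range (A+2), s2 i))
        - ((T3 - T4) - ((∑ i ∈ range (A+2), s3 i) - (∑ i ∈ range (A+2), s4 i))) := by
    rw [sbp_bv_mul_succ hSbp, map_sub, map_sub, ctrSm_bv_mul hSm, ctrSm_bv_mul hSm]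
    have hW1 : (if j ≤ A+1 then Sm (A+1-j) (Sbp (C+1) x) else 0) = T1 - T2 := by
      rw [hT1, hT2]
      by_cases h1 : j ≤ A+1
      · rw [if_pos h1, hQ (A+1-j) (C+1), if_pos h1]
        congr 1
        by_cases h2 : j ≤ A
        · rw [if_neg (by omega : ¬ (A+1-j = 0 ∨ C+1 = 0)), if_pos h2,
            (by omega : A+1-j-1 = A-j), (by omega : C+1-1 = C)]
        · rw [if_pos (by omega : A+1-j = 0 ∨ C+1 = 0), if_neg h2]
      · rw [if_neg h1, if_neg h1, if_neg (by omega), sub_zero]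
    have hW2 : (if j+1 ≤ A+1 then Sm (A+1-(j+1)) (Sbp C x) else 0) = T3 - T4 := by
      rw [hT3, hT4]
      by_cases h1 : j ≤ A
      · rw [if_pos (by omega : j+1 ≤ A+1), hQ (A+1-(j+1)) C, if_pos h1,
          (by omega : A+1-(j+1) = A-j)]
        congr 1
        by_cases h2 : j+1 ≤ A ∧ ¬ C = 0
        · rw [if_neg (by omega : ¬ (A-j = 0 ∨ C = 0)), if_pos h2,
            (by omega : A-j-1 = A-(j+1))]
        · rw [if_pos (by omega : A-j = 0 ∨ C = 0), if_neg h2]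
      · rw [if_neg (by omega : ¬ j+1 ≤ A+1), if_neg h1, if_neg (by omega), sub_zero]
    have hU1 : (∑ i ∈ range (A+2), (if i ≤ j then bv (j-i)
          * ctr 0 (Sm (A+1-i) (Sbp (C+1) x)) else 0))
        = (∑ i ∈ range (A+2), s1 i) - (∑ i ∈ range (A+2), s2 i) := by
      rw [← Finset.sum_sub_distrib]
      refine sum_norm fun i hi => ?_
      rw [hs1, hs2]
      by_cases h1 : i ≤ j
      · rw [if_pos h1, hP (A+1-i) (C+1)]
        simp only [if_pos h1]
        by_cases h2 : i < A+1
        · rw [if_neg (by omega : ¬ (A+1-i = 0 ∨ C+1 = 0)), if_pos (And.intro h1 h2),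
            (by omega : A+1-i-1 = A-i), (by omega : C+1-1 = C), mul_sub]
        · rw [if_pos (by omega : A+1-i = 0 ∨ C+1 = 0), sub_zero, if_neg (by omega), sub_zero]
      · rw [if_neg h1]
        simp only [if_neg h1, if_neg (by omega : ¬ (i ≤ j ∧ i < A+1)), sub_zero]
    have hU2 : (∑ i ∈ range (A+2), (if i ≤ j+1 then bv (j+1-i)
          * ctr 0 (Sm (A+1-i) (Sbp C x)) else 0))
        = (∑ i ∈ range (A+2), s3 i) - (∑ i ∈ range (A+2), s4 i) := by
      rw [← Finset.sum_sub_distrib]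
      refine sum_norm fun i hi => ?_
      rw [hs3, hs4]
      by_cases h1 : i ≤ j+1
      · rw [if_pos h1, hP (A+1-i) C]
        simp only [if_pos h1]
        by_cases h2 : i < A+1 ∧ ¬ C = 0
        · rw [if_neg (by omega : ¬ (A+1-i = 0 ∨ C = 0)), if_pos (And.intro ⟨h1, h2.1⟩ h2.2),
            (by omega : A+1-i-1 = A-i), mul_sub]
        · rw [if_pos (by omega : A+1-i = 0 ∨ C = 0), sub_zero, if_neg (by tauto), sub_zero]
      · rw [if_neg h1]
        simp only [if_neg h1, if_neg (by omega : ¬ ((i ≤ j+1 ∧ i < A+1) ∧ ¬ C = 0)), sub_zero]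
    rw [hW1, hW2, hU1, hU2]
  have eR1 : Sbp (C+1) (ctr 0 (Sm (A+1) (bv j * x)))
      = T1 - ((∑ i ∈ range (A+2), s1 i) - (∑ i ∈ range (A+2), s6 i)) := by
    rw [ctrSm_bv_mul hSm, map_sub, map_sum]
    congr 1
    · rw [hT1]
      by_cases h1 : j ≤ A+1
      · rw [if_pos h1, if_pos h1]
      · rw [if_neg h1, if_neg h1, map_zero]
    · rw [← Finset.sum_sub_distrib]
      refine sum_norm fun i hi => ?_
      rw [hs1, hs6]
      by_cases h1 : i ≤ j
      · rw [if_pos h1, sbp_bv_mul_succ hSbp]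
        simp only [if_pos h1]
        rw [(by omega : j - i + 1 = j + 1 - i)]
      · rw [if_neg h1, map_zero]
        simp only [if_neg h1, sub_zero]
  have eR2 : Sbp C (ctr 0 (Sm A (bv j * x)))
      = T3 - ((∑ i ∈ range (A+1), s7 i) - (∑ i ∈ range (A+1), s8 i)) := by
    rw [ctrSm_bv_mul hSm, map_sub, map_sum]
    congr 1
    · rw [hT3]
      by_cases h1 : j ≤ A
      · rw [if_pos h1, if_pos h1]
      · rw [if_neg h1, if_neg h1, map_zero]
    · rw [← Finset.sum_sub_distrib]
      refine sum_norm fun i hi => ?_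
      rw [hs7, hs8]
      by_cases h1 : i ≤ j
      · rw [if_pos h1, sbp_bv_mul hSbp]
        simp only [if_pos h1]
        congr 1
        by_cases h2 : C = 0
        · rw [if_pos h2, if_neg (by tauto)]
        · rw [if_neg h2, if_pos (And.intro h1 h2), (by omega : j - i + 1 = j + 1 - i)]
      · rw [if_neg h1, map_zero]
        simp only [if_neg h1, if_neg (fun hc : i ≤ j ∧ ¬ C = 0 => h1 hc.1), sub_zero]
  have G1 : (∑ i ∈ range (A+2), s2 i) = ∑ i ∈ range (A+1), s7 i := by
    have e1 : ∀ i, i < A+2 → s2 i = (if i < A+1 then s7 i else 0) := by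
      intro i hi
      simp only [hs2, hs7]
      split_ifs <;> first | rfl | omega
    rw [sum_norm e1, sum_range_succ_pred]
  have G2 : (∑ i ∈ range (A+2), s3 i) = (∑ i ∈ range (A+2), s6 i) + T2 := by
    rw [hs3, sum_ite_le_succ (A+2) j (fun i => bv (j+1-i) * Sbp C (ctr 0 (Sm (A+1-i) x)))]
    congr 1
    rw [hT2]
    by_cases h1 : j ≤ A
    · rw [if_pos (by omega : j + 1 < A+2), if_pos h1, Nat.sub_self,
        (by omega : A+1-(j+1) = A-j)]
    · rw [if_neg (by omega : ¬ j + 1 < A+2), if_neg h1]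
  have G3 : (∑ i ∈ range (A+2), s4 i) = (∑ i ∈ range (A+1), s8 i) + T4 := by
    have e1 : ∀ i, i < A+2 → s4 i = (if i ≤ j+1 then (if i < A+1 ∧ ¬ C = 0
        then bv (j+1-i) * Sbp (C-1) (ctr 0 (Sm (A-i) x)) else 0) else 0) := by
      intro i hi
      simp only [hs4]
      split_ifs <;> first | rfl | omega | tauto
    rw [sum_norm e1, sum_ite_le_succ]
    congr 1
    · have e2 : ∀ i, i < A+2 → (if i ≤ j then (if i < A+1 ∧ ¬ C = 0
          then bv (j+1-i) * Sbp (C-1) (ctr 0 (Sm (A-i) x)) else 0) else 0)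
          = (if i < A+1 then s8 i else 0) := by
        intro i hi
        simp only [hs8]
        split_ifs <;> first | rfl | omega
      rw [sum_norm e2, sum_range_succ_pred]
    · rw [hT4]
      by_cases h1 : j + 1 ≤ A ∧ ¬ C = 0
      · rw [if_pos (by omega : j + 1 < A+2), if_pos (And.intro (by omega : j+1 < A+1) h1.2),
          Nat.sub_self, if_pos h1]
      · by_cases h2 : j + 1 < A + 2
        · rw [if_pos h2, if_neg (fun hc => h1 ⟨by omega, hc.2⟩), if_neg h1]
        · rw [if_neg h2, if_neg h1]
  rw [eL, eR1, eR2, G1, G2, G3]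
  abel


lemma step_P (hSm : IsSigmaMinus Sm) (hSbp : IsSigmaBarPlus Sbp) {x : ExtV}
    (hx : GoodPair Sm Sbp x) (j a c : ℕ) :
    ctr 0 (Sm a (Sbp c (bv j * x))) = Sbp c (ctr 0 (Sm a (bv j * x)))
      - (if a = 0 ∨ c = 0 then 0 else Sbp (c-1) (ctr 0 (Sm (a-1) (bv j * x)))) := by
  rcases a with _ | A
  · rw [if_pos (Or.inl rfl), sub_zero]
    rcases c with _ | C
    · exact step_P_c0 hSm hSbp hx j 0
    · exact step_P_a0 hSm hSbp hx j C
  · rcases c with _ | C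
    · rw [if_pos (Or.inr rfl), sub_zero]
      exact step_P_c0 hSm hSbp hx j (A+1)
    · rw [if_neg (by omega)]
      exact step_P_main hSm hSbp hx j A C

lemma GoodPair.bv_mul (hSm : IsSigmaMinus Sm) (hSbp : IsSigmaBarPlus Sbp) {x : ExtV}
    (hx : GoodPair Sm Sbp x) (j : ℕ) : GoodPair Sm Sbp (bv j * x) :=
  fun a c => ⟨step_Q hSm hSbp hx j a c, step_P hSm hSbp hx j a c⟩

lemma GoodPair.iota_mul (hSm : IsSigmaMinus Sm) (hSbp : IsSigmaBarPlus Sbp) {x : ExtV}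
    (hx : GoodPair Sm Sbp x) (v : Vb) :
    GoodPair Sm Sbp (ExteriorAlgebra.ι ℚ v * x) := by
  have hv : (ExteriorAlgebra.ι ℚ v : ExtV) = ∑ i ∈ v.support, v i • bv i := by
    conv_lhs => rw [← Finsupp.sum_single v]
    rw [Finsupp.sum, map_sum]
    refine Finset.sum_congr rfl fun i _ => ?_
    rw [bv, ← map_smul, Finsupp.smul_single, smul_eq_mul, mul_one]
  rw [hv, Finset.sum_mul]
  refine Finset.sum_induction _ (GoodPair Sm Sbp) (fun a b => GoodPair.add) GoodPair.zero ?_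
  intro i _
  rw [smul_mul_assoc]
  exact GoodPair.smul _ (GoodPair.bv_mul hSm hSbp hx i)

lemma goodPair_of_mem_pow (hSm : IsSigmaMinus Sm) (hSbp : IsSigmaBarPlus Sbp)
    {r : ℕ} {u : ExtV}
    (hu : u ∈ (LinearMap.range (ExteriorAlgebra.ι ℚ : Vb →ₗ[ℚ] ExtV)) ^ r) :
    GoodPair Sm Sbp u := by
  refine Submodule.pow_induction_on_left _ (fun t => GoodPair.algebraMap' hSm hSbp t)
    (fun a b ha hb => GoodPair.add ha hb) ?_ hu
  rintro m ⟨v, rfl⟩ y hy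
  exact GoodPair.iota_mul hSm hSbp hy v

end step

/-- `β₀ ⌟ σ₋(w) σ̄₊(z) u = (1 - z/w) σ̄₊(z) (β₀ ⌟ σ₋(w) u)` for
`u ∈ ⋀^r V`.  The outer power series variable is `z`, the inner one is `t = w^{-1}`. -/
theorem beta0_sigmaMinus_sbarPlus
    (Sm Sbp : ℕ → Module.End ℚ ExtV)
    (hSm : IsSigmaMinus Sm) (hSbp : IsSigmaBarPlus Sbp)
    (r : ℕ) (u : ExtV)
    (hu : u ∈ (LinearMap.range (ExteriorAlgebra.ι ℚ : Vb →ₗ[ℚ] ExtV)) ^ r) :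
    (PowerSeries.mk fun n => PowerSeries.mk fun m => ctr 0 (Sm m (Sbp n u))
      : PowerSeries (PowerSeries ExtV))
    = (1 - PowerSeries.X * PowerSeries.C (R := PowerSeries ExtV) PowerSeries.X) *
        PowerSeries.mk fun n => PowerSeries.mk fun m => Sbp n (ctr 0 (Sm m u)) := by
  have hg := goodPair_of_mem_pow hSm hSbp hu
  ext n m
  simp only [sub_mul, one_mul, mul_assoc, map_sub, PowerSeries.coeff_mk]
  rcases n with _ | N
  · rw [PowerSeries.coeff_zero_X_mul, map_zero, sub_zero]
    have := (hg m 0).2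
    simpa using this
  · rw [PowerSeries.coeff_succ_X_mul, PowerSeries.coeff_C_mul, PowerSeries.coeff_mk]
    rcases m with _ | M
    · rw [PowerSeries.coeff_zero_X_mul, sub_zero]
      have := (hg 0 (N+1)).2
      simpa using this
    · rw [PowerSeries.coeff_succ_X_mul, PowerSeries.coeff_mk]
      have := (hg (M+1) (N+1)).2
      simpa using this
end
end
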